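/- Let G = (V,E,B) be a directed mixed graph and let P be a partition of its nodes. Let π be a walk on G with induced coarse walk co(π) on co(G,P). If co(π) is σ-blocked by a set S ⊆ P of nodes of co(G,P), then π is σ-blocked by T = ∪_{W∈S} W. -/

import Mathlib

/-! ## Mixed graphs -/

/-- A mixed graph: directed, bidirected and undirected edges, no self-edges. -/
structure MixedGraph (V : Type) where
  dir : V → V → Prop
  bidir : V → V → Prop
  undir : V → V → Prop
  bidir_symm : ∀ {a b}, bidir a b → bidir b a
  undir_symm : ∀ {a b}, undir a b → undir b a
  dir_irrefl : ∀ a, ¬ dir a a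
  bidir_irrefl : ∀ a, ¬ bidir a a
  undir_irrefl : ∀ a, ¬ undir a a

namespace MixedGraph

variable {V I : Type}

/-- A directed mixed graph is a mixed graph without undirected edges. -/
def IsDMG (G : MixedGraph V) : Prop := ∀ a b, ¬ G.undir a b

/-- `a` and `b` lie in the same strongly connected component: there are directed
paths between them in both directions. -/
def Strongly (G : MixedGraph V) (a b : V) : Prop :=
  Relation.ReflTransGen G.dir a b ∧ Relation.ReflTransGen G.dir b a

lemma Strongly.refl (G : MixedGraph V) (a : V) : G.Strongly a a :=
  ⟨Relation.ReflTransGen.refl, Relation.ReflTransGen.refl⟩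

lemma Strongly.symm {G : MixedGraph V} {a b : V} (h : G.Strongly a b) : G.Strongly b a :=
  ⟨h.2, h.1⟩

/-- A graph is acyclic if it has no nontrivial directed closed walk. -/
def Acyclic (G : MixedGraph V) : Prop := ∀ a, ¬ Relation.TransGen G.dir a a

end MixedGraph

/-! ## Walks -/

/-- The four ways in which an edge can occur on a walk, as traversed from its
first node `a` to its second node `b`: `fw` is `a → b`, `bw` is `a ← b`,
`bi` is `a ↔ b` and `un` is `a − b`. -/
inductive StepKind | fw | bw | bi | un
deriving DecidableEq

/-- A step of a walk: an ordered pair of nodes together with the kind of edge. -/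
structure Step (V : Type) where
  a : V
  b : V
  k : StepKind

/-- The step is an actual edge of the graph `G`. -/
def Step.ok {V : Type} (G : MixedGraph V) (s : Step V) : Prop :=
  match s.k with
  | .fw => G.dir s.a s.b
  | .bw => G.dir s.b s.a
  | .bi => G.bidir s.a s.b
  | .un => G.undir s.a s.b

/-- The edge of the step has an arrowhead at its first node. -/
def Step.headA {V : Type} (s : Step V) : Prop := s.k = .bw ∨ s.k = .bi

/-- The edge of the step has an arrowhead at its second node. -/
def Step.headB {V : Type} (s : Step V) : Prop := s.k = .fw ∨ s.k = .bi

namespace MixedGraph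

variable {V I : Type}

/-- `IsWalk G x y L`: the list of steps `L` forms a walk from `x` to `y` in `G`. -/
inductive IsWalk (G : MixedGraph V) : V → V → List (Step V) → Prop
  | nil (a : V) : IsWalk G a a []
  | cons {c : V} (s : Step V) (L : List (Step V)) (hok : s.ok G)
      (hw : IsWalk G s.b c L) : IsWalk G s.a c (s :: L)

/-- `v` is a collider at junction `i` of the walk `L`: both edges adjacent to the
inner node `v` point into `v`. -/
def ColliderAt (L : List (Step V)) (i : ℕ) (v : V) : Prop :=
  ∃ s t, L[i]? = some s ∧ L[i+1]? = some t ∧ s.b = v ∧ t.a = v ∧ s.headB ∧ t.headA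

/-- `v` is a non-collider at junction `i` of the walk `L`. -/
def NonColliderAt (L : List (Step V)) (i : ℕ) (v : V) : Prop :=
  ∃ s t, L[i]? = some s ∧ L[i+1]? = some t ∧ s.b = v ∧ t.a = v ∧ ¬ (s.headB ∧ t.headA)

/-- The walk `L` from `x` to `y` is m-blocked by the node set `S`. -/
def MBlockedWalk (G : MixedGraph V) (S : Set V) (x y : V) (L : List (Step V)) : Prop :=
  x ∈ S ∨ y ∈ S ∨
  (∃ i v, ColliderAt L i v ∧ ∀ d, Relation.ReflTransGen G.dir v d → d ∉ S) ∨
  (∃ i v, NonColliderAt L i v ∧ v ∈ S)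

/-- The walk `L` from `x` to `y` is σ-blocked by the node set `S`. -/
def SigmaBlockedWalk (G : MixedGraph V) (S : Set V) (x y : V) (L : List (Step V)) : Prop :=
  x ∈ S ∨ y ∈ S ∨
  (∃ i v, ColliderAt L i v ∧ ∀ d, Relation.ReflTransGen G.dir v d → d ∉ S) ∨
  (∃ i s t, L[i]? = some s ∧ L[i+1]? = some t ∧ s.b = t.a ∧ ¬ (s.headB ∧ t.headA) ∧
    s.b ∈ S ∧
    (((s.k = .bw ∨ s.k = .un) ∧ ¬ G.Strongly s.b s.a) ∨
     ((t.k = .fw ∨ t.k = .un) ∧ ¬ G.Strongly t.a t.b)))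

/-- `x` and `y` are m-separated by `S` in `G`. -/
def MSep (G : MixedGraph V) (S : Set V) (x y : V) : Prop :=
  ∀ L, G.IsWalk x y L → G.MBlockedWalk S x y L

/-- `x` and `y` are σ-separated by `S` in `G`. -/
def SigmaSep (G : MixedGraph V) (S : Set V) (x y : V) : Prop :=
  ∀ L, G.IsWalk x y L → G.SigmaBlockedWalk S x y L

/-! ## Acyclification -/

/-- The acyclification of a mixed graph. -/
def acy (G : MixedGraph V) : MixedGraph V where
  dir a b := (∃ c, G.dir a c ∧ G.Strongly c b) ∧ ¬ G.Strongly a b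
  bidir a b := a ≠ b ∧ (G.Strongly a b ∨
    ∃ a' b', G.Strongly a a' ∧ G.Strongly b b' ∧ G.bidir a' b')
  undir a b := ¬ G.Strongly a b ∧ G.undir a b
  bidir_symm := by
    rintro a b ⟨hab, h | ⟨a', b', ha, hb, h⟩⟩
    · exact ⟨hab.symm, Or.inl h.symm⟩
    · exact ⟨hab.symm, Or.inr ⟨b', a', hb, ha, G.bidir_symm h⟩⟩
  undir_symm := by
    rintro a b ⟨h1, h2⟩
    exact ⟨fun h => h1 h.symm, G.undir_symm h2⟩
  dir_irrefl := fun a h => h.2 (Strongly.refl G a)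
  bidir_irrefl := fun a h => h.1 rfl
  undir_irrefl := fun a h => h.1 (Strongly.refl G a)

/-! ## Coarse graphs -/

/-- The coarse (quotient) graph of `G` with respect to the partition given by the
quotient map `q` onto the set of groups `I`. -/
def coarse (G : MixedGraph V) (q : V → I) : MixedGraph I where
  dir Y Z := Y ≠ Z ∧ ∃ y z, q y = Y ∧ q z = Z ∧ G.dir y z
  bidir Y Z := Y ≠ Z ∧ ∃ y z, q y = Y ∧ q z = Z ∧ G.bidir y z
  undir Y Z := Y ≠ Z ∧ ∃ y z, q y = Y ∧ q z = Z ∧ G.undir y z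
  bidir_symm := by
    rintro Y Z ⟨hne, y, z, hy, hz, h⟩
    exact ⟨hne.symm, z, y, hz, hy, G.bidir_symm h⟩
  undir_symm := by
    rintro Y Z ⟨hne, y, z, hy, hz, h⟩
    exact ⟨hne.symm, z, y, hz, hy, G.undir_symm h⟩
  dir_irrefl := fun Y h => h.1 rfl
  bidir_irrefl := fun Y h => h.1 rfl
  undir_irrefl := fun Y h => h.1 rfl

end MixedGraph

open Classical in
/-- The coarse walk induced by a micro walk: steps internal to a group are dropped
(collapsing each `P`-segment to the single group containing it) and every
between-group step is replaced by the step of the same kind between the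
corresponding groups. -/
noncomputable def coWalk {V I : Type} (q : V → I) (L : List (Step V)) : List (Step I) :=
  L.filterMap fun s => if q s.a = q s.b then none else some ⟨q s.a, q s.b, s.k⟩

section Helpers
open MixedGraph

variable {V I : Type}

lemma walk_steps_ok {G : MixedGraph V} {x y : V} {L : List (Step V)}
    (h : G.IsWalk x y L) : ∀ s ∈ L, s.ok G := by
  induction h with
  | nil => simp
  | cons s L hok hw ih =>
    intro t ht
    rcases List.mem_cons.1 ht with rfl | h'
    · exact hok
    · exact ih t h'

lemma walk_head {G : MixedGraph V} {x y : V} {L : List (Step V)} (h : G.IsWalk x y L)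
    (t : Step V) (ht : L[0]? = some t) : t.a = x := by
  cases h with
  | nil => simp at ht
  | cons s L' hok hw =>
    simp only [List.getElem?_cons_zero, Option.some.injEq] at ht
    subst ht; rfl

lemma walk_chain {G : MixedGraph V} {x y : V} {L : List (Step V)} (h : G.IsWalk x y L) :
    ∀ i (s t : Step V), L[i]? = some s → L[i+1]? = some t → s.b = t.a := by
  induction h with
  | nil => simp
  | cons s L hok hw ih =>
    intro i u t hu ht
    cases i with
    | zero =>
      simp only [List.getElem?_cons_zero, Option.some.injEq] at hu
      subst hu
      rw [List.getElem?_cons_succ] at ht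
      exact (walk_head hw t ht).symm
    | succ i =>
      rw [List.getElem?_cons_succ] at hu ht
      exact ih i u t hu ht

lemma coarse_rtg {G : MixedGraph V} (q : V → I) {v d : V}
    (h : Relation.ReflTransGen G.dir v d) :
    Relation.ReflTransGen (G.coarse q).dir (q v) (q d) := by
  induction h with
  | refl => exact Relation.ReflTransGen.refl
  | @tail b c _ hd ih =>
    rcases eq_or_ne (q b) (q c) with hqe | hqe
    · rwa [hqe] at ih
    · exact ih.tail ⟨hqe, b, c, rfl, rfl, hd⟩

lemma coarse_strongly {G : MixedGraph V} (q : V → I) {a b : V} (h : G.Strongly a b) :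
    (G.coarse q).Strongly (q a) (q b) := ⟨coarse_rtg q h.1, coarse_rtg q h.2⟩

lemma filterMap_head' {α β : Type} (f : α → Option β) :
    ∀ (L : List α) (b : β), (L.filterMap f)[0]? = some b →
    ∃ (j : ℕ) (a : α), L[j]? = some a ∧ f a = some b ∧ ∀ k < j, ∀ e, L[k]? = some e → f e = none := by
  intro L
  induction L with
  | nil => simp
  | cons x L ih =>
    intro b hb
    cases hfx : f x with
    | none =>
      rw [List.filterMap_cons, hfx] at hb
      obtain ⟨j, a, hj, hfa, hall⟩ := ih b hb
      refine ⟨j + 1, a, by simpa using hj, hfa, ?_⟩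
      intro k hk e he
      cases k with
      | zero =>
        simp only [List.getElem?_cons_zero, Option.some.injEq] at he
        subst he; exact hfx
      | succ k =>
        rw [List.getElem?_cons_succ] at he
        exact hall k (by omega) e he
    | some c =>
      rw [List.filterMap_cons, hfx] at hb
      simp only [List.getElem?_cons_zero, Option.some.injEq] at hb
      subst hb
      exact ⟨0, x, by simp, hfx, by simp⟩

lemma filterMap_pair' {α β : Type} (f : α → Option β) :
    ∀ (L : List α) (i : ℕ) (b c : β),
    (L.filterMap f)[i]? = some b → (L.filterMap f)[i+1]? = some c →
    ∃ (j j' : ℕ) (a a' : α), j < j' ∧ L[j]? = some a ∧ f a = some b ∧ L[j']? = some a' ∧ f a' = some c ∧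
      ∀ k, j < k → k < j' → ∀ e, L[k]? = some e → f e = none := by
  intro L
  induction L with
  | nil => simp
  | cons x L ih =>
    intro i b c hb hc
    cases hfx : f x with
    | none =>
      rw [List.filterMap_cons, hfx] at hb hc
      obtain ⟨j, j', a, a', hlt, hj, hfa, hj', hfa', hall⟩ := ih i b c hb hc
      refine ⟨j + 1, j' + 1, a, a', by omega, by simpa using hj, hfa, by simpa using hj',
        hfa', ?_⟩
      intro k hk1 hk2 e he
      cases k with
      | zero => omega
      | succ k =>
        rw [List.getElem?_cons_succ] at he
        exact hall k (by omega) (by omega) e he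
    | some d =>
      rw [List.filterMap_cons, hfx] at hb hc
      cases i with
      | zero =>
        simp only [List.getElem?_cons_zero, Option.some.injEq] at hb
        subst hb
        rw [List.getElem?_cons_succ] at hc
        obtain ⟨j, a, hj, hfa, hall⟩ := filterMap_head' f L c hc
        refine ⟨0, j + 1, x, a, by omega, by simp, hfx, by simpa using hj, hfa, ?_⟩
        intro k hk1 hk2 e he
        cases k with
        | zero => omega
        | succ k =>
          rw [List.getElem?_cons_succ] at he
          exact hall k (by omega) e he
      | succ i =>
        rw [List.getElem?_cons_succ] at hb hc
        obtain ⟨j, j', a, a', hlt, hj, hfa, hj', hfa', hall⟩ := ih i b c hb hc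
        refine ⟨j + 1, j' + 1, a, a', by omega, by simpa using hj, hfa, by simpa using hj',
          hfa', ?_⟩
        intro k hk1 hk2 e he
        cases k with
        | zero => omega
        | succ k =>
          rw [List.getElem?_cons_succ] at he
          exact hall k (by omega) (by omega) e he

open Classical in
lemma coWalk_eq (q : V → I) (L : List (Step V)) :
    coWalk q L = L.filterMap
      (fun s => if q s.a = q s.b then none else some ⟨q s.a, q s.b, s.k⟩) := rfl

open Classical in
lemma coWalk_step_spec {q : V → I} {s : Step V} {cs : Step I}
    (h : (if q s.a = q s.b then none
        else some (⟨q s.a, q s.b, s.k⟩ : Step I)) = some cs) :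
    q s.a ≠ q s.b ∧ cs.a = q s.a ∧ cs.b = q s.b ∧ cs.k = s.k := by
  by_cases hq : q s.a = q s.b
  · simp [hq] at h
  · rw [if_neg hq] at h
    obtain rfl := Option.some.inj h
    exact ⟨hq, rfl, rfl, rfl⟩

open Classical in
lemma coWalk_step_none {q : V → I} {s : Step V}
    (h : (if q s.a = q s.b then none
        else some (⟨q s.a, q s.b, s.k⟩ : Step I)) = none) :
    q s.a = q s.b := by
  by_cases hq : q s.a = q s.b
  · exact hq
  · rw [if_neg hq] at h; simp at h

lemma length_of_getElem?_some {α : Type} {L : List α} {n : ℕ} {a : α}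
    (h : L[n]? = some a) : n < L.length := by
  by_contra hn
  rw [List.getElem?_eq_none (by omega)] at h
  cases h

lemma mem_of_getElem?' {α : Type} {L : List α} {n : ℕ} {a : α}
    (h : L[n]? = some a) : a ∈ L := by
  obtain ⟨hn, rfl⟩ := List.getElem?_eq_some_iff.1 h
  exact List.getElem_mem hn

end Helpers

open MixedGraph in
/-- Let `G` be a directed mixed graph, `q` the quotient map of a
partition of its nodes and `L` a walk on `G` from `x` to `y` with induced coarse
walk `coWalk q L` on the coarse graph. If the coarse walk is σ-blocked by a set
`S` of groups, then `L` is σ-blocked by the union `T = q ⁻¹' S` of the groups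
in `S`. -/
theorem sigmaBlocked_of_coarse_sigmaBlocked {V I : Type} (G : MixedGraph V)
    (hDMG : G.IsDMG) (q : V → I) (hq : Function.Surjective q)
    (x y : V) (L : List (Step V)) (hL : G.IsWalk x y L) (S : Set I)
    (hblock : (G.coarse q).SigmaBlockedWalk S (q x) (q y) (coWalk q L)) :
    G.SigmaBlockedWalk (q ⁻¹' S) x y L := by
  rcases hblock with hx | hy | ⟨i, W, ⟨cs, ct, hcs, hct, hcsb, hcta, hcsB, hctA⟩, hdesc⟩ |
      ⟨i, cs, ct, hcs, hct, hba, hnc, hbS, hdisj⟩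
  · exact Or.inl hx
  · exact Or.inr (Or.inl hy)
  · -- coarse collider case
    rw [coWalk_eq] at hcs hct
    obtain ⟨j, j', s', t', hjj, hj, hfs, hj', hft, hall⟩ := filterMap_pair' _ L i cs ct hcs hct
    obtain ⟨hne, hcsa, hcsb', hcsk⟩ := coWalk_step_spec hfs
    obtain ⟨hne', hcta', hctb', hctk⟩ := coWalk_step_spec hft
    have hlen : j' < L.length := length_of_getElem?_some hj'
    -- all nodes in the segment between `s'` and `t'` map to the group `cs.b`
    have qseg : ∀ m, j ≤ m → m < j' → ∀ u : Step V, L[m]? = some u → q u.b = cs.b := by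
      intro m hm
      induction m, hm using Nat.le_induction with
      | base =>
        intro _ u hu
        obtain rfl := Option.some.inj (hj.symm.trans hu)
        exact hcsb'.symm
      | succ m hm ih =>
        intro hm1 u hu
        have hu0 : L[m]? = some (L[m]'(by omega)) := List.getElem?_eq_getElem (by omega)
        have hq0 := ih (by omega) _ hu0
        have hchain := walk_chain hL m _ u hu0 hu
        have hint : q u.a = q u.b := coWalk_step_none (hall (m+1) (by omega) hm1 u hu)
        rw [← hint, ← hchain]; exact hq0
    -- there is a micro collider in the segment
    have hcol : ∃ m, j ≤ m ∧ m < j' ∧ ∃ u w : Step V,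
        L[m]? = some u ∧ L[m+1]? = some w ∧ u.headB ∧ w.headA := by
      by_contra hno
      have hB : ∀ m, j ≤ m → (m < j' → ∀ u : Step V, L[m]? = some u → u.headB) := by
        intro m hm
        induction m, hm using Nat.le_induction with
        | base =>
          intro _ u hu
          obtain rfl := Option.some.inj (hj.symm.trans hu)
          show s'.k = .fw ∨ s'.k = .bi
          rw [← hcsk]; exact hcsB
        | succ m hm ih =>
          intro hm1 u hu
          have hu0 : L[m]? = some (L[m]'(by omega)) := List.getElem?_eq_getElem (by omega)
          have hB0 := ih (by omega) _ hu0
          have hnA : ¬ u.headA := fun hA => hno ⟨m, hm, by omega, _, u, hu0, hu, hB0, hA⟩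
          have hok : u.ok G := walk_steps_ok hL u (mem_of_getElem?' hu)
          cases hk : u.k with
          | fw => exact Or.inl hk
          | bw => exact absurd (Or.inl hk) hnA
          | bi => exact absurd (Or.inr hk) hnA
          | un =>
            exfalso
            have : G.undir u.a u.b := by simpa [Step.ok, hk] using hok
            exact hDMG _ _ this
      have h1 : L[j'-1]? = some (L[j'-1]'(by omega)) := List.getElem?_eq_getElem (by omega)
      have hB1 := hB (j'-1) (by omega) (by omega) _ h1
      have hct' : L[(j'-1)+1]? = some t' := by
        rw [show j'-1+1 = j' from by omega]; exact hj'
      have htA : t'.headA := by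
        show t'.k = .bw ∨ t'.k = .bi
        rw [← hctk]; exact hctA
      exact hno ⟨j'-1, by omega, by omega, _, t', h1, hct', hB1, htA⟩
    obtain ⟨m, hm1, hm2, u, w, hu, hw, huB, hwA⟩ := hcol
    refine Or.inr (Or.inr (Or.inl ⟨m, u.b,
      ⟨u, w, hu, hw, rfl, (walk_chain hL m u w hu hw).symm, huB, hwA⟩, ?_⟩))
    intro d hd hdS
    have hco := coarse_rtg q hd
    rw [qseg m hm1 hm2 u hu, hcsb] at hco
    exact hdesc (q d) hco hdS
  · -- coarse non-collider case
    rw [coWalk_eq] at hcs hct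
    obtain ⟨j, j', s', t', hjj, hj, hfs, hj', hft, hall⟩ := filterMap_pair' _ L i cs ct hcs hct
    obtain ⟨hne, hcsa, hcsb', hcsk⟩ := coWalk_step_spec hfs
    obtain ⟨hne', hcta', hctb', hctk⟩ := coWalk_step_spec hft
    have hlen : j' < L.length := length_of_getElem?_some hj'
    rcases hdisj with ⟨hk, hnstr⟩ | ⟨hk, hnstr⟩
    · -- the edge out of the segment to the left
      have hskbw : s'.k = .bw := by
        rw [← hcsk]
        rcases hk with h | h
        · exact h
        · exfalso
          have hok : s'.ok G := walk_steps_ok hL s' (mem_of_getElem?' hj)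
          have hku : s'.k = .un := by rw [← hcsk]; exact h
          have : G.undir s'.a s'.b := by simpa [Step.ok, hku] using hok
          exact hDMG _ _ this
      have hnext : L[j+1]? = some (L[j+1]'(by omega)) := List.getElem?_eq_getElem (by omega)
      refine Or.inr (Or.inr (Or.inr ⟨j, s', _, hj, hnext,
        walk_chain hL j _ _ hj hnext, ?_, ?_, Or.inl ⟨Or.inl hskbw, ?_⟩⟩))
      · rintro ⟨hB, -⟩
        simp [Step.headB, hskbw] at hB
      · show q s'.b ∈ S
        rw [← hcsb']; exact hbS
      · intro hstr
        have hco := coarse_strongly q hstr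
        rw [hcsb', hcsa] at hnstr
        exact hnstr hco
    · -- the edge out of the segment to the right
      have htkfw : t'.k = .fw := by
        rw [← hctk]
        rcases hk with h | h
        · exact h
        · exfalso
          have hok : t'.ok G := walk_steps_ok hL t' (mem_of_getElem?' hj')
          have hku : t'.k = .un := by rw [← hctk]; exact h
          have : G.undir t'.a t'.b := by simpa [Step.ok, hku] using hok
          exact hDMG _ _ this
      have hprev : L[j'-1]? = some (L[j'-1]'(by omega)) := List.getElem?_eq_getElem (by omega)
      have hct' : L[(j'-1)+1]? = some t' := by
        rw [show j'-1+1 = j' from by omega]; exact hj'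
      have hch := walk_chain hL (j'-1) _ _ hprev hct'
      refine Or.inr (Or.inr (Or.inr ⟨j'-1, _, t', hprev, hct', hch, ?_, ?_,
        Or.inr ⟨Or.inl htkfw, ?_⟩⟩))
      · rintro ⟨-, hA⟩
        simp [Step.headA, htkfw] at hA
      · show q (L[j'-1]'(by omega)).b ∈ S
        rw [hch, ← hcta', ← hba]; exact hbS
      · intro hstr
        have hco := coarse_strongly q hstr
        rw [hcta', hctb'] at hnstr
        exact hnstr hco
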